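/- arXiv:1205.1206 — 5 statements merged into one kernel-verified Lean document; each statement's English description precedes it below -/
import Mathlib

section
/- Let f, g : ℝ² → ℝ be smooth with g_s(0,0) = 0 and with nonvanishing Jacobian f_s(0,0)·g_t(0,0) − f_t(0,0)·g_s(0,0) ≠ 0 (hence f_s(0,0) ≠ 0 and g_t(0,0) ≠ 0), let ε ∈ {1,−1}, and define G(u,x,y) = g(u, x² + ε y²). Then: (a) the origin is a degenerate critical point of G (the Hessian matrix of G at the origin has determinant zero) if and only if g_ss(0,0) = 0; and (b) if θ : ℝ → ℝ is twice differentiable near f(0,0) and satisfies θ(f(u,0)) = g(u,0) for all u near 0, then deriv θ (f(0,0)) = 0 and deriv (deriv θ) (f(0,0)) = g_ss(0,0)/f_s(0,0)². Consequently the origin is a degenerate critical point of G if and only if the graphic curve u ↦ (f(u,0), g(u,0)) has a horizontal inflection point at u = 0. -/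
open Filter Topology

/-- The standard basis of `ℝ × ℝ × ℝ` as a `Fin 3`-indexed family. -/
def stdBasis3 : Fin 3 → ℝ × ℝ × ℝ := ![(1, 0, 0), (0, 1, 0), (0, 0, 1)]

/-- The Hessian matrix of a function `G : ℝ³ → ℝ` at a point `p`. -/
noncomputable def hessian3 (G : ℝ × ℝ × ℝ → ℝ) (p : ℝ × ℝ × ℝ) :
    Matrix (Fin 3) (Fin 3) ℝ :=
  Matrix.of fun i j =>
    fderiv ℝ (fun q => fderiv ℝ G q (stdBasis3 j)) p (stdBasis3 i)

lemma eval_pair (L : ℝ × ℝ →L[ℝ] ℝ) (a b : ℝ) :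
    L (a, b) = a * L (1, 0) + b * L (0, 1) := by
  have h : (a, b) = a • ((1:ℝ), (0:ℝ)) + b • ((0:ℝ), (1:ℝ)) := by simp
  rw [h, map_add, map_smul, map_smul]; simp

lemma hasDerivAt_slice (h : ℝ × ℝ → ℝ) (u : ℝ) (hd : DifferentiableAt ℝ h (u, 0)) :
    HasDerivAt (fun u => h (u, 0)) (fderiv ℝ h (u, 0) (1, 0)) u := by
  have line : HasDerivAt (fun u : ℝ => (u, (0:ℝ))) ((1:ℝ), (0:ℝ)) u :=
    (hasDerivAt_id u).prodMk (hasDerivAt_const u 0)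
  exact hd.hasFDerivAt.comp_hasDerivAt u line

lemma diff_partial (g : ℝ × ℝ → ℝ) (hg : ContDiff ℝ (⊤ : ℕ∞) g) (v : ℝ × ℝ) :
    Differentiable ℝ (fun z => fderiv ℝ g z v) := by
  have h1 : ContDiff ℝ (⊤:ℕ∞) (fun z => fderiv ℝ g z) := (contDiff_infty_iff_fderiv.mp hg).2
  exact fun z => (((ContinuousLinearMap.apply ℝ ℝ v).contDiff.comp h1).differentiable
    (by simp)) z

def A3 : ℝ × ℝ × ℝ →L[ℝ] ℝ :=
  (ContinuousLinearMap.fst ℝ ℝ ℝ).comp (ContinuousLinearMap.snd ℝ ℝ (ℝ × ℝ))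

def B3 : ℝ × ℝ × ℝ →L[ℝ] ℝ :=
  (ContinuousLinearMap.snd ℝ ℝ ℝ).comp (ContinuousLinearMap.snd ℝ ℝ (ℝ × ℝ))

@[simp] lemma A3_apply (v : ℝ × ℝ × ℝ) : A3 v = v.2.1 := rfl
@[simp] lemma B3_apply (v : ℝ × ℝ × ℝ) : B3 v = v.2.2 := rfl

noncomputable def Dphi (ε : ℝ) (q : ℝ × ℝ × ℝ) : ℝ × ℝ × ℝ →L[ℝ] ℝ × ℝ :=
  (ContinuousLinearMap.fst ℝ ℝ (ℝ × ℝ)).prod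
    ((q.2.1 • A3 + q.2.1 • A3) + ε • (q.2.2 • B3 + q.2.2 • B3))

@[simp] lemma Dphi_apply (ε : ℝ) (q v : ℝ × ℝ × ℝ) :
    Dphi ε q v = (v.1, (q.2.1 * v.2.1 + q.2.1 * v.2.1) + ε * (q.2.2 * v.2.2 + q.2.2 * v.2.2)) := by
  simp [Dphi, smul_eq_mul]; ring

lemma hasFDerivAt_phi (ε : ℝ) (q : ℝ × ℝ × ℝ) :
    HasFDerivAt (fun p : ℝ × ℝ × ℝ => (p.1, p.2.1 * p.2.1 + ε * (p.2.2 * p.2.2)))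
      (Dphi ε q) q := by
  have hx : HasFDerivAt (fun p : ℝ × ℝ × ℝ => p.2.1) A3 q :=
    hasFDerivAt_fst.comp q hasFDerivAt_snd
  have hy : HasFDerivAt (fun p : ℝ × ℝ × ℝ => p.2.2) B3 q :=
    hasFDerivAt_snd.comp q hasFDerivAt_snd
  exact hasFDerivAt_fst.prodMk ((hx.mul hx).add ((hy.mul hy).const_mul ε))

/-- Let `f, g : ℝ² → ℝ` be smooth with `g_s(0,0) = 0` and nonvanishing Jacobian
`f_s g_t − f_t g_s ≠ 0` at the origin (hence `f_s(0,0) ≠ 0` and `g_t(0,0) ≠ 0`), let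
`ε = ±1` and `G(u,x,y) = g(u, x² + εy²)`. Then:
(a) the origin is a degenerate critical point of `G` (the Hessian matrix has determinant
zero) iff `g_ss(0,0) = 0`; and
(b) if `θ` is twice differentiable near `f(0,0)` and satisfies `θ(f(u,0)) = g(u,0)` for all
`u` near `0`, then `θ'(f(0,0)) = 0` and `θ''(f(0,0)) = g_ss(0,0)/f_s(0,0)²`; consequently
degeneracy of the critical point is equivalent to the graphic curve having a horizontal
inflection point. -/
theorem fold_degenerate_iff_inflection (f g : ℝ × ℝ → ℝ)
    (hf : ContDiff ℝ (⊤ : ℕ∞) f) (hg : ContDiff ℝ (⊤ : ℕ∞) g)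
    (hgs : fderiv ℝ g (0, 0) (1, 0) = 0)
    (hJ : fderiv ℝ f (0, 0) (1, 0) * fderiv ℝ g (0, 0) (0, 1)
        - fderiv ℝ f (0, 0) (0, 1) * fderiv ℝ g (0, 0) (1, 0) ≠ 0)
    (ε : ℝ) (hε : ε = 1 ∨ ε = -1)
    (G : ℝ × ℝ × ℝ → ℝ)
    (hG : ∀ u x y : ℝ, G (u, x, y) = g (u, x ^ 2 + ε * y ^ 2)) :
    (fderiv ℝ f (0, 0) (1, 0) ≠ 0 ∧ fderiv ℝ g (0, 0) (0, 1) ≠ 0)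
    ∧ ((hessian3 G (0, 0, 0)).det = 0 ↔
        fderiv ℝ (fun q => fderiv ℝ g q (1, 0)) (0, 0) (1, 0) = 0)
    ∧ ∀ θ : ℝ → ℝ,
        (∀ᶠ z in 𝓝 (f (0, 0)), DifferentiableAt ℝ θ z ∧ DifferentiableAt ℝ (deriv θ) z) →
        (∀ᶠ u in 𝓝 (0 : ℝ), θ (f (u, 0)) = g (u, 0)) →
        deriv θ (f (0, 0)) = 0
        ∧ deriv (deriv θ) (f (0, 0)) =
            fderiv ℝ (fun q => fderiv ℝ g q (1, 0)) (0, 0) (1, 0)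
              / (fderiv ℝ f (0, 0) (1, 0)) ^ 2
        ∧ ((hessian3 G (0, 0, 0)).det = 0 ↔ deriv (deriv θ) (f (0, 0)) = 0) := by
  have hfd : Differentiable ℝ f := hf.differentiable (by simp)
  have hfs : fderiv ℝ f (0, 0) (1, 0) ≠ 0 := by
    intro h; apply hJ; rw [hgs, h]; ring
  have hgt : fderiv ℝ g (0, 0) (0, 1) ≠ 0 := by
    intro h; apply hJ; rw [hgs, h]; ring
  have hε0 : ε ≠ 0 := by rcases hε with h | h <;> simp [h]
  have hgd : Differentiable ℝ g := hg.differentiable (by simp)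
  have hGfun : G = fun p => g (p.1, p.2.1 * p.2.1 + ε * (p.2.2 * p.2.2)) := by
    funext p
    have h2 : p.2.1 ^ 2 + ε * p.2.2 ^ 2 = p.2.1 * p.2.1 + ε * (p.2.2 * p.2.2) := by ring
    rw [show p = (p.1, p.2.1, p.2.2) from rfl, hG, h2]
  have hGd : ∀ q : ℝ × ℝ × ℝ, HasFDerivAt G
      ((fderiv ℝ g (q.1, q.2.1 * q.2.1 + ε * (q.2.2 * q.2.2))).comp (Dphi ε q)) q := by
    intro q
    rw [hGfun]
    exact ((hgd _).hasFDerivAt).comp q (hasFDerivAt_phi ε q)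
  have hGu : ∀ q : ℝ × ℝ × ℝ, fderiv ℝ G q ((1:ℝ), (0:ℝ), (0:ℝ)) =
      fderiv ℝ g (q.1, q.2.1 * q.2.1 + ε * (q.2.2 * q.2.2)) (1, 0) := by
    intro q
    rw [(hGd q).fderiv, ContinuousLinearMap.comp_apply, Dphi_apply]
    norm_num
  have hGx : ∀ q : ℝ × ℝ × ℝ, fderiv ℝ G q ((0:ℝ), (1:ℝ), (0:ℝ)) =
      (q.2.1 + q.2.1) * fderiv ℝ g (q.1, q.2.1 * q.2.1 + ε * (q.2.2 * q.2.2)) (0, 1) := by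
    intro q
    rw [(hGd q).fderiv, ContinuousLinearMap.comp_apply, Dphi_apply, eval_pair]
    norm_num
  have hGy : ∀ q : ℝ × ℝ × ℝ, fderiv ℝ G q ((0:ℝ), (0:ℝ), (1:ℝ)) =
      (ε * (q.2.2 + q.2.2)) * fderiv ℝ g (q.1, q.2.1 * q.2.1 + ε * (q.2.2 * q.2.2)) (0, 1) := by
    intro q
    rw [(hGd q).fderiv, ContinuousLinearMap.comp_apply, Dphi_apply, eval_pair]
    norm_num
  -- second derivatives
  have hgsd := diff_partial g hg ((1:ℝ),(0:ℝ))
  have hgtd := diff_partial g hg ((0:ℝ),(1:ℝ))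
  have hxp : HasFDerivAt (fun p : ℝ × ℝ × ℝ => p.2.1) A3 (((0:ℝ),(0:ℝ),(0:ℝ)) : ℝ×ℝ×ℝ) :=
    hasFDerivAt_fst.comp _ hasFDerivAt_snd
  have hyp : HasFDerivAt (fun p : ℝ × ℝ × ℝ => p.2.2) B3 (((0:ℝ),(0:ℝ),(0:ℝ)) : ℝ×ℝ×ℝ) :=
    hasFDerivAt_snd.comp _ hasFDerivAt_snd
  have hcs : HasFDerivAt (fun q : ℝ×ℝ×ℝ => fderiv ℝ g (q.1, q.2.1*q.2.1 + ε*(q.2.2*q.2.2)) ((1:ℝ),(0:ℝ)))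
      ((fderiv ℝ (fun z => fderiv ℝ g z ((1:ℝ),(0:ℝ))) ((0:ℝ),(0:ℝ))).comp (Dphi ε ((0:ℝ),(0:ℝ),(0:ℝ))))
      (((0:ℝ),(0:ℝ),(0:ℝ)) : ℝ×ℝ×ℝ) := by
    have h1 := ((hgsd _).hasFDerivAt).comp (((0:ℝ),(0:ℝ),(0:ℝ)) : ℝ×ℝ×ℝ) (hasFDerivAt_phi ε _)
    convert h1 using 3 <;> norm_num <;> rfl
  have hct : HasFDerivAt (fun q : ℝ×ℝ×ℝ => fderiv ℝ g (q.1, q.2.1*q.2.1 + ε*(q.2.2*q.2.2)) ((0:ℝ),(1:ℝ)))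
      ((fderiv ℝ (fun z => fderiv ℝ g z ((0:ℝ),(1:ℝ))) ((0:ℝ),(0:ℝ))).comp (Dphi ε ((0:ℝ),(0:ℝ),(0:ℝ))))
      (((0:ℝ),(0:ℝ),(0:ℝ)) : ℝ×ℝ×ℝ) := by
    have h1 := ((hgtd _).hasFDerivAt).comp (((0:ℝ),(0:ℝ),(0:ℝ)) : ℝ×ℝ×ℝ) (hasFDerivAt_phi ε _)
    convert h1 using 3 <;> norm_num <;> rfl
  have e00 : fderiv ℝ (fun q : ℝ×ℝ×ℝ => fderiv ℝ G q ((1:ℝ),(0:ℝ),(0:ℝ))) (((0:ℝ),(0:ℝ),(0:ℝ)) : ℝ×ℝ×ℝ) ((1:ℝ),(0:ℝ),(0:ℝ))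
      = fderiv ℝ (fun z => fderiv ℝ g z ((1:ℝ),(0:ℝ))) ((0:ℝ),(0:ℝ)) ((1:ℝ),(0:ℝ)) := by
    rw [funext hGu, hcs.fderiv]
    norm_num
  have e10 : fderiv ℝ (fun q : ℝ×ℝ×ℝ => fderiv ℝ G q ((1:ℝ),(0:ℝ),(0:ℝ))) (((0:ℝ),(0:ℝ),(0:ℝ)) : ℝ×ℝ×ℝ) ((0:ℝ),(1:ℝ),(0:ℝ)) = 0 := by
    rw [funext hGu, hcs.fderiv]
    rw [ContinuousLinearMap.comp_apply, Dphi_apply]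
    norm_num
    exact map_zero _
  have e20 : fderiv ℝ (fun q : ℝ×ℝ×ℝ => fderiv ℝ G q ((1:ℝ),(0:ℝ),(0:ℝ))) (((0:ℝ),(0:ℝ),(0:ℝ)) : ℝ×ℝ×ℝ) ((0:ℝ),(0:ℝ),(1:ℝ)) = 0 := by
    rw [funext hGu, hcs.fderiv]
    rw [ContinuousLinearMap.comp_apply, Dphi_apply]
    norm_num
    exact map_zero _
  have h1x := ((hxp.add hxp).mul hct).fderiv
  have h1y := (((hyp.add hyp).const_mul ε).mul hct).fderiv
  have e01 : fderiv ℝ (fun q : ℝ×ℝ×ℝ => fderiv ℝ G q ((0:ℝ),(1:ℝ),(0:ℝ))) (((0:ℝ),(0:ℝ),(0:ℝ)) : ℝ×ℝ×ℝ) ((1:ℝ),(0:ℝ),(0:ℝ)) = 0 := by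
    rw [funext hGx]
    refine (congrArg (fun L : (ℝ×ℝ×ℝ) →L[ℝ] ℝ => L ((1:ℝ),(0:ℝ),(0:ℝ))) h1x).trans ?_
    norm_num
  have e11 : fderiv ℝ (fun q : ℝ×ℝ×ℝ => fderiv ℝ G q ((0:ℝ),(1:ℝ),(0:ℝ))) (((0:ℝ),(0:ℝ),(0:ℝ)) : ℝ×ℝ×ℝ) ((0:ℝ),(1:ℝ),(0:ℝ))
      = 2 * fderiv ℝ g ((0:ℝ),(0:ℝ)) ((0:ℝ),(1:ℝ)) := by
    rw [funext hGx]
    refine (congrArg (fun L : (ℝ×ℝ×ℝ) →L[ℝ] ℝ => L ((0:ℝ),(1:ℝ),(0:ℝ))) h1x).trans ?_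
    norm_num
    ring
  have e21 : fderiv ℝ (fun q : ℝ×ℝ×ℝ => fderiv ℝ G q ((0:ℝ),(1:ℝ),(0:ℝ))) (((0:ℝ),(0:ℝ),(0:ℝ)) : ℝ×ℝ×ℝ) ((0:ℝ),(0:ℝ),(1:ℝ)) = 0 := by
    rw [funext hGx]
    refine (congrArg (fun L : (ℝ×ℝ×ℝ) →L[ℝ] ℝ => L ((0:ℝ),(0:ℝ),(1:ℝ))) h1x).trans ?_
    norm_num
  have e02 : fderiv ℝ (fun q : ℝ×ℝ×ℝ => fderiv ℝ G q ((0:ℝ),(0:ℝ),(1:ℝ))) (((0:ℝ),(0:ℝ),(0:ℝ)) : ℝ×ℝ×ℝ) ((1:ℝ),(0:ℝ),(0:ℝ)) = 0 := by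
    rw [funext hGy]
    refine (congrArg (fun L : (ℝ×ℝ×ℝ) →L[ℝ] ℝ => L ((1:ℝ),(0:ℝ),(0:ℝ))) h1y).trans ?_
    norm_num
  have e12 : fderiv ℝ (fun q : ℝ×ℝ×ℝ => fderiv ℝ G q ((0:ℝ),(0:ℝ),(1:ℝ))) (((0:ℝ),(0:ℝ),(0:ℝ)) : ℝ×ℝ×ℝ) ((0:ℝ),(1:ℝ),(0:ℝ)) = 0 := by
    rw [funext hGy]
    refine (congrArg (fun L : (ℝ×ℝ×ℝ) →L[ℝ] ℝ => L ((0:ℝ),(1:ℝ),(0:ℝ))) h1y).trans ?_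
    norm_num
  have e22 : fderiv ℝ (fun q : ℝ×ℝ×ℝ => fderiv ℝ G q ((0:ℝ),(0:ℝ),(1:ℝ))) (((0:ℝ),(0:ℝ),(0:ℝ)) : ℝ×ℝ×ℝ) ((0:ℝ),(0:ℝ),(1:ℝ))
      = 2 * ε * fderiv ℝ g ((0:ℝ),(0:ℝ)) ((0:ℝ),(1:ℝ)) := by
    rw [funext hGy]
    refine (congrArg (fun L : (ℝ×ℝ×ℝ) →L[ℝ] ℝ => L ((0:ℝ),(0:ℝ),(1:ℝ))) h1y).trans ?_
    norm_num
    ring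
  have hdet : (hessian3 G ((0:ℝ),(0:ℝ),(0:ℝ))).det
      = fderiv ℝ (fun q => fderiv ℝ g q (1, 0)) (0, 0) (1, 0)
        * ((2 * fderiv ℝ g (0, 0) (0, 1)) * (2 * ε * fderiv ℝ g (0, 0) (0, 1))) := by
    rw [Matrix.det_fin_three]
    simp only [hessian3, Matrix.of_apply, stdBasis3, Matrix.cons_val_zero, Matrix.cons_val_one,
      Matrix.head_cons, Matrix.cons_val_two, Matrix.tail_cons]
    rw [e00, e10, e20, e01, e11, e21, e02, e12, e22]
    ring
  -- the iff for part (a)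
  have hk : (2 * fderiv ℝ g (0, 0) (0, 1)) * (2 * ε * fderiv ℝ g (0, 0) (0, 1)) ≠ 0 :=
    mul_ne_zero (mul_ne_zero two_ne_zero hgt)
      (mul_ne_zero (mul_ne_zero two_ne_zero hε0) hgt)
  have hiff : (hessian3 G (0, 0, 0)).det = 0 ↔
      fderiv ℝ (fun q => fderiv ℝ g q (1, 0)) (0, 0) (1, 0) = 0 := by
    rw [hdet, mul_eq_zero]
    exact ⟨fun h => h.resolve_right hk, fun h => Or.inl h⟩
  refine ⟨⟨hfs, hgt⟩, hiff, ?_⟩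
  -- part (b)
  intro θ hθ hcomp
  have hθ0 := hθ.self_of_nhds
  have hF1 : ∀ u : ℝ, HasDerivAt (fun u => f (u, 0)) (fderiv ℝ f (u, 0) (1, 0)) u :=
    fun u => hasDerivAt_slice f u (hfd _)
  have htends : Tendsto (fun u : ℝ => f (u, 0)) (𝓝 0) (𝓝 (f (0, 0))) :=
    (hF1 0).continuousAt
  have hθF : ∀ᶠ u in 𝓝 (0:ℝ),
      DifferentiableAt ℝ θ (f (u, 0)) ∧ DifferentiableAt ℝ (deriv θ) (f (u, 0)) :=
    htends.eventually hθ
  have hkey : ∀ᶠ u in 𝓝 (0:ℝ),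
      deriv θ (f (u, 0)) * fderiv ℝ f (u, 0) (1, 0) = fderiv ℝ g (u, 0) (1, 0) := by
    filter_upwards [hθF, hcomp.eventually_nhds] with u hu hn
    have hL : HasDerivAt (fun v => θ (f (v, 0)))
        (deriv θ (f (u, 0)) * fderiv ℝ f (u, 0) (1, 0)) u :=
      (hu.1.hasDerivAt).comp u (hF1 u)
    have hR : HasDerivAt (fun v => g (v, 0)) (fderiv ℝ g (u, 0) (1, 0)) u :=
      hasDerivAt_slice g u (hgd _)
    have hL' : HasDerivAt (fun v => g (v, 0))
        (deriv θ (f (u, 0)) * fderiv ℝ f (u, 0) (1, 0)) u :=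
      hL.congr_of_eventuallyEq (hn.mono fun v hv => hv.symm)
    exact hL'.unique hR
  have hd1 : deriv θ (f (0, 0)) * fderiv ℝ f (0, 0) (1, 0) = fderiv ℝ g (0, 0) (1, 0) :=
    hkey.self_of_nhds
  have hθ'0 : deriv θ (f (0, 0)) = 0 := by
    rw [hgs] at hd1
    exact (mul_eq_zero.mp hd1).resolve_right hfs
  have hfsd := diff_partial f hf ((1:ℝ), (0:ℝ))
  have hLHS : HasDerivAt (fun u : ℝ => deriv θ (f (u, 0)) * fderiv ℝ f (u, 0) (1, 0))
      (deriv (deriv θ) (f (0, 0)) * fderiv ℝ f (0, 0) (1, 0) * fderiv ℝ f (0, 0) (1, 0)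
        + deriv θ (f (0, 0)) * fderiv ℝ (fun z => fderiv ℝ f z (1, 0)) (0, 0) (1, 0)) 0 := by
    have h1 : HasDerivAt (fun u : ℝ => deriv θ (f (u, 0)))
        (deriv (deriv θ) (f (0, 0)) * fderiv ℝ f (0, 0) (1, 0)) 0 :=
      HasDerivAt.comp (h₂ := deriv θ) (h := fun u : ℝ => f (u, 0)) 0
        (hθ0.2.hasDerivAt) (hF1 0)
    have h2 : HasDerivAt (fun u : ℝ => fderiv ℝ f (u, 0) (1, 0))
        (fderiv ℝ (fun z => fderiv ℝ f z (1, 0)) (0, 0) (1, 0)) 0 :=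
      hasDerivAt_slice (fun z => fderiv ℝ f z (1, 0)) 0 (hfsd _)
    exact h1.mul h2
  have hRHS : HasDerivAt (fun u : ℝ => fderiv ℝ g (u, 0) (1, 0))
      (fderiv ℝ (fun z => fderiv ℝ g z (1, 0)) (0, 0) (1, 0)) 0 :=
    hasDerivAt_slice (fun z => fderiv ℝ g z (1, 0)) 0 (hgsd _)
  have hLHS' : HasDerivAt (fun u : ℝ => fderiv ℝ g (u, 0) (1, 0))
      (deriv (deriv θ) (f (0, 0)) * fderiv ℝ f (0, 0) (1, 0) * fderiv ℝ f (0, 0) (1, 0)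
        + deriv θ (f (0, 0)) * fderiv ℝ (fun z => fderiv ℝ f z (1, 0)) (0, 0) (1, 0)) 0 :=
    hLHS.congr_of_eventuallyEq (hkey.mono fun v hv => hv.symm)
  have heq2 := hLHS'.unique hRHS
  rw [hθ'0, zero_mul, add_zero] at heq2
  have hθ'' : deriv (deriv θ) (f (0, 0)) =
      fderiv ℝ (fun q => fderiv ℝ g q (1, 0)) (0, 0) (1, 0)
        / (fderiv ℝ f (0, 0) (1, 0)) ^ 2 := by
    rw [← heq2, eq_div_iff (pow_ne_zero 2 hfs)]
    ring
  refine ⟨hθ'0, hθ'', ?_⟩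
  rw [hiff, hθ'']
  constructor
  · intro h; rw [h, zero_div]
  · intro h
    rcases div_eq_zero_iff.mp h with h' | h'
    · exact h'
    · exact absurd h' (pow_ne_zero 2 hfs)
end

section
/- Let g : ℝ² → ℝ be smooth with g_s(0,0) = 0, and define G : ℝ³ → ℝ by G(u,x,y) = g(u, y² + ux − x³). Then the Hessian matrix of G at the origin, with respect to the standard basis of ℝ³, equals [[g_ss(0,0), g_t(0,0), 0], [g_t(0,0), 0, 0], [0, 0, 2·g_t(0,0)]], and its determinant equals −2·g_t(0,0)³. In particular, if g_t(0,0) ≠ 0 then the origin is a non-degenerate critical point of G; thus no cusp point of a stable product map can be a degenerate critical point of either factor function. -/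
open ContinuousLinearMap

noncomputable section CuspAux

/-- The cusp normal form map `ψ(u,x,y) = (u, y² + u·x − x³)`. -/
def cuspPsi (q : ℝ × ℝ × ℝ) : ℝ × ℝ := (q.1, q.2.2 ^ 2 + q.1 * q.2.1 - q.2.1 ^ 3)

/-- The derivative of `cuspPsi` at `q`. -/
def cuspDpsi (q : ℝ × ℝ × ℝ) : (ℝ × ℝ × ℝ) →L[ℝ] ℝ × ℝ :=
  (fst ℝ ℝ (ℝ × ℝ)).prod
    (q.2.1 • fst ℝ ℝ (ℝ × ℝ) +
      (q.1 - 3 * q.2.1 ^ 2) • ((fst ℝ ℝ ℝ).comp (snd ℝ ℝ (ℝ × ℝ))) +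
      (2 * q.2.2) • ((snd ℝ ℝ ℝ).comp (snd ℝ ℝ (ℝ × ℝ))))

lemma hasFDerivAt_cuspPsi (q : ℝ × ℝ × ℝ) : HasFDerivAt cuspPsi (cuspDpsi q) q := by
  have hx : HasFDerivAt (fun q : ℝ × ℝ × ℝ => q.2.1)
      ((fst ℝ ℝ ℝ).comp (snd ℝ ℝ (ℝ × ℝ))) q := hasFDerivAt_fst.comp q hasFDerivAt_snd
  have hy : HasFDerivAt (fun q : ℝ × ℝ × ℝ => q.2.2)
      ((snd ℝ ℝ ℝ).comp (snd ℝ ℝ (ℝ × ℝ))) q := hasFDerivAt_snd.comp q hasFDerivAt_snd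
  have hu : HasFDerivAt (fun q : ℝ × ℝ × ℝ => q.1) (fst ℝ ℝ (ℝ × ℝ)) q := hasFDerivAt_fst
  have h2 : HasFDerivAt (fun q : ℝ × ℝ × ℝ => q.2.2 * q.2.2 + q.1 * q.2.1 - q.2.1 * (q.2.1 * q.2.1)) _ q :=
    ((hy.mul hy).add (hu.mul hx)).sub (hx.mul (hx.mul hx))
  have heq : (fun q : ℝ × ℝ × ℝ => q.2.2 ^ 2 + q.1 * q.2.1 - q.2.1 ^ 3)
      = fun q : ℝ × ℝ × ℝ => q.2.2 * q.2.2 + q.1 * q.2.1 - q.2.1 * (q.2.1 * q.2.1) := by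
    funext q; ring
  unfold cuspPsi cuspDpsi
  refine HasFDerivAt.prodMk hasFDerivAt_fst ?_
  rw [heq]
  refine h2.congr_fderiv ?_
  refine ContinuousLinearMap.ext fun v => ?_
  simp
  ring

lemma cuspDpsi_apply (q v : ℝ × ℝ × ℝ) :
    cuspDpsi q v = (v.1, q.2.1 * v.1 + (q.1 - 3 * q.2.1 ^ 2) * v.2.1 + 2 * q.2.2 * v.2.2) := by
  simp [cuspDpsi]

@[simp] lemma cuspPsi_zero : cuspPsi 0 = 0 := by
  simp [cuspPsi]

end CuspAux

/-- For smooth `g : ℝ² → ℝ` with `g_s(0,0) = 0` and `G(u,x,y) = g(u, y² + ux − x³)` (the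
cusp normal form case), the Hessian matrix of `G` at the origin is
`[[g_ss, g_t, 0], [g_t, 0, 0], [0, 0, 2g_t]]` (entries at `(0,0)`) with determinant
`−2·g_t(0,0)³`; in particular if `g_t(0,0) ≠ 0` then the origin is a non-degenerate
critical point of `G`. -/
theorem cusp_hessian (g : ℝ × ℝ → ℝ) (hg : ContDiff ℝ (⊤ : ℕ∞) g)
    (hgs : fderiv ℝ g (0, 0) (1, 0) = 0)
    (G : ℝ × ℝ × ℝ → ℝ)
    (hG : ∀ u x y : ℝ, G (u, x, y) = g (u, y ^ 2 + u * x - x ^ 3)) :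
    hessian3 G (0, 0, 0) =
      !![fderiv ℝ (fun q => fderiv ℝ g q (1, 0)) (0, 0) (1, 0), fderiv ℝ g (0, 0) (0, 1), 0;
         fderiv ℝ g (0, 0) (0, 1), 0, 0;
         0, 0, 2 * fderiv ℝ g (0, 0) (0, 1)]
    ∧ (hessian3 G (0, 0, 0)).det = -2 * (fderiv ℝ g (0, 0) (0, 1)) ^ 3
    ∧ (fderiv ℝ g (0, 0) (0, 1) ≠ 0 →
        fderiv ℝ G (0, 0, 0) = 0 ∧ (hessian3 G (0, 0, 0)).det ≠ 0) := by
  have hdg : Differentiable ℝ g := hg.differentiable (by simp)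
  -- chain rule for G
  have hfd : ∀ q, fderiv ℝ G q = (fderiv ℝ g (cuspPsi q)).comp (cuspDpsi q) := by
    have hGeq : G = fun q => g (cuspPsi q) := funext fun q => hG q.1 q.2.1 q.2.2
    intro q
    rw [hGeq]
    exact (HasFDerivAt.comp q (hdg (cuspPsi q)).hasFDerivAt (hasFDerivAt_cuspPsi q)).fderiv
  -- smoothness of directional derivatives of g
  have hgw : ∀ w : ℝ × ℝ, ContDiff ℝ (⊤ : ℕ∞) (fun p => fderiv ℝ g p w) := fun w =>
    (hg.fderiv_right (by exact_mod_cast le_top)).clm_apply contDiff_const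
  -- derivative of q ↦ (∂_w g)(ψ q) at the origin
  have gcomp : ∀ w : ℝ × ℝ, HasFDerivAt (fun q => fderiv ℝ g (cuspPsi q) w)
      ((fderiv ℝ (fun p => fderiv ℝ g p w) (0, 0)).comp (cuspDpsi (0, 0, 0))) (0, 0, 0) := by
    intro w
    have h := HasFDerivAt.comp ((0, 0, 0) : ℝ × ℝ × ℝ)
      (((hgw w).differentiable (by simp) (cuspPsi (0, 0, 0))).hasFDerivAt)
      (hasFDerivAt_cuspPsi (0, 0, 0))
    have h0 : cuspPsi ((0, 0, 0) : ℝ × ℝ × ℝ) = ((0, 0) : ℝ × ℝ) := cuspPsi_zero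
    rwa [h0] at h
  have hx0 : HasFDerivAt (fun q : ℝ × ℝ × ℝ => q.2.1)
      ((fst ℝ ℝ ℝ).comp (snd ℝ ℝ (ℝ × ℝ))) (0, 0, 0) := hasFDerivAt_fst.comp _ hasFDerivAt_snd
  have hy0 : HasFDerivAt (fun q : ℝ × ℝ × ℝ => q.2.2)
      ((snd ℝ ℝ ℝ).comp (snd ℝ ℝ (ℝ × ℝ))) (0, 0, 0) := hasFDerivAt_snd.comp _ hasFDerivAt_snd
  have hu0 : HasFDerivAt (fun q : ℝ × ℝ × ℝ => q.1) (fst ℝ ℝ (ℝ × ℝ)) (0, 0, 0) :=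
    hasFDerivAt_fst
  -- the three directional-derivative functions of G
  have hcol0 : (fun q => fderiv ℝ G q ((1 : ℝ), (0 : ℝ), (0 : ℝ)))
      = fun q => fderiv ℝ g (cuspPsi q) (1, 0) + q.2.1 * fderiv ℝ g (cuspPsi q) (0, 1) := by
    funext q
    rw [hfd q]
    show fderiv ℝ g (cuspPsi q) (cuspDpsi q (1, 0, 0)) = _
    rw [cuspDpsi_apply]
    have h1 : ((1 : ℝ), q.2.1 * 1 + (q.1 - 3 * q.2.1 ^ 2) * 0 + 2 * q.2.2 * 0)
        = ((1 : ℝ), (0 : ℝ)) + q.2.1 • ((0 : ℝ), (1 : ℝ)) := by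
      simp
    rw [h1, map_add, map_smul, smul_eq_mul]
  have hcol1 : (fun q => fderiv ℝ G q ((0 : ℝ), (1 : ℝ), (0 : ℝ)))
      = fun q => (q.1 - 3 * q.2.1 ^ 2) * fderiv ℝ g (cuspPsi q) (0, 1) := by
    funext q
    rw [hfd q]
    show fderiv ℝ g (cuspPsi q) (cuspDpsi q (0, 1, 0)) = _
    rw [cuspDpsi_apply]
    have h1 : ((0 : ℝ), q.2.1 * 0 + (q.1 - 3 * q.2.1 ^ 2) * 1 + 2 * q.2.2 * 0)
        = (q.1 - 3 * q.2.1 ^ 2) • ((0 : ℝ), (1 : ℝ)) := by simp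
    rw [h1, map_smul, smul_eq_mul]
  have hcol2 : (fun q => fderiv ℝ G q ((0 : ℝ), (0 : ℝ), (1 : ℝ)))
      = fun q => 2 * q.2.2 * fderiv ℝ g (cuspPsi q) (0, 1) := by
    funext q
    rw [hfd q]
    show fderiv ℝ g (cuspPsi q) (cuspDpsi q (0, 0, 1)) = _
    rw [cuspDpsi_apply]
    have h1 : ((0 : ℝ), q.2.1 * 0 + (q.1 - 3 * q.2.1 ^ 2) * 0 + 2 * q.2.2 * 1)
        = (2 * q.2.2) • ((0 : ℝ), (1 : ℝ)) := by simp
    rw [h1, map_smul, smul_eq_mul]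
  -- evaluation of the composed derivative at the origin
  have hD0 : ∀ w : ℝ × ℝ, ∀ v : ℝ × ℝ × ℝ,
      ((fderiv ℝ (fun p => fderiv ℝ g p w) (0, 0)).comp (cuspDpsi (0, 0, 0))) v
        = v.1 * fderiv ℝ (fun p => fderiv ℝ g p w) (0, 0) (1, 0) := by
    intro w v
    have h1 : cuspDpsi (0, 0, 0) v = v.1 • ((1 : ℝ), (0 : ℝ)) := by
      rw [cuspDpsi_apply]; simp
    rw [ContinuousLinearMap.comp_apply, h1, map_smul, smul_eq_mul]
  -- second derivatives of G at the origin in the three coordinate directions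
  have hd0 : ∀ v : ℝ × ℝ × ℝ,
      fderiv ℝ (fun q => fderiv ℝ G q ((1 : ℝ), (0 : ℝ), (0 : ℝ))) (0, 0, 0) v
      = v.1 * fderiv ℝ (fun p => fderiv ℝ g p (1, 0)) (0, 0) (1, 0)
        + v.2.1 * fderiv ℝ g (0, 0) (0, 1) := by
    intro v
    rw [hcol0]
    have h : HasFDerivAt (fun q : ℝ × ℝ × ℝ => fderiv ℝ g (cuspPsi q) (1, 0) + q.2.1 * fderiv ℝ g (cuspPsi q) (0, 1)) _ (0, 0, 0) := (gcomp (1, 0)).add (hx0.mul (gcomp (0, 1)))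
    rw [h.fderiv, ContinuousLinearMap.add_apply, hD0 (1, 0) v]
    have h2 : (((0 : ℝ), (0 : ℝ), (0 : ℝ)).2.1 •
        (fderiv ℝ (fun p => fderiv ℝ g p (0, 1)) (0, 0)).comp (cuspDpsi (0, 0, 0)) +
        fderiv ℝ g (cuspPsi (0, 0, 0)) (0, 1) •
          (fst ℝ ℝ ℝ).comp (snd ℝ ℝ (ℝ × ℝ))) v
        = v.2.1 * fderiv ℝ g (0, 0) (0, 1) := by
      have h0 : cuspPsi ((0, 0, 0) : ℝ × ℝ × ℝ) = ((0, 0) : ℝ × ℝ) := cuspPsi_zero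
      rw [ContinuousLinearMap.add_apply, ContinuousLinearMap.smul_apply,
        ContinuousLinearMap.smul_apply, h0]
      simp [mul_comm]
    rw [h2]
  have hd1 : ∀ v : ℝ × ℝ × ℝ,
      fderiv ℝ (fun q => fderiv ℝ G q ((0 : ℝ), (1 : ℝ), (0 : ℝ))) (0, 0, 0) v
      = v.1 * fderiv ℝ g (0, 0) (0, 1) := by
    intro v
    rw [hcol1]
    have hcoef : HasFDerivAt (fun q : ℝ × ℝ × ℝ => q.1 - 3 * q.2.1 ^ 2)
        (fst ℝ ℝ (ℝ × ℝ) - (0 : ℝ) • ((fst ℝ ℝ ℝ).comp (snd ℝ ℝ (ℝ × ℝ)))) (0, 0, 0) := by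
      have h3 : HasFDerivAt (fun q : ℝ × ℝ × ℝ => 3 * q.2.1 ^ 2)
          ((0 : ℝ) • ((fst ℝ ℝ ℝ).comp (snd ℝ ℝ (ℝ × ℝ)))) (0, 0, 0) := by
        have hc : HasFDerivAt (fun q : ℝ × ℝ × ℝ => (3 : ℝ) * (q.2.1 * q.2.1)) _ (0, 0, 0) := (hasFDerivAt_const (3 : ℝ) ((0, 0, 0) : ℝ × ℝ × ℝ)).mul (hx0.mul hx0)
        have hf : (fun q : ℝ × ℝ × ℝ => 3 * q.2.1 ^ 2) = fun q => (3 : ℝ) * (q.2.1 * q.2.1) := by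
          funext q; ring
        rw [hf]
        refine hc.congr_fderiv ?_
        refine ContinuousLinearMap.ext fun v => ?_
        simp
      exact hu0.sub h3
    have h : HasFDerivAt (fun q : ℝ × ℝ × ℝ => (q.1 - 3 * q.2.1 ^ 2) * fderiv ℝ g (cuspPsi q) (0, 1)) _ (0, 0, 0) := hcoef.mul (gcomp (0, 1))
    rw [h.fderiv]
    have h0 : cuspPsi ((0, 0, 0) : ℝ × ℝ × ℝ) = ((0, 0) : ℝ × ℝ) := cuspPsi_zero
    rw [ContinuousLinearMap.add_apply, ContinuousLinearMap.smul_apply,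
      ContinuousLinearMap.smul_apply, h0]
    simp [mul_comm]
  have hd2 : ∀ v : ℝ × ℝ × ℝ,
      fderiv ℝ (fun q => fderiv ℝ G q ((0 : ℝ), (0 : ℝ), (1 : ℝ))) (0, 0, 0) v
      = 2 * v.2.2 * fderiv ℝ g (0, 0) (0, 1) := by
    intro v
    rw [hcol2]
    have hcoef : HasFDerivAt (fun q : ℝ × ℝ × ℝ => 2 * q.2.2)
        ((2 : ℝ) • ((snd ℝ ℝ ℝ).comp (snd ℝ ℝ (ℝ × ℝ)))) (0, 0, 0) :=
      hy0.const_mul 2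
    have h : HasFDerivAt (fun q : ℝ × ℝ × ℝ => 2 * q.2.2 * fderiv ℝ g (cuspPsi q) (0, 1)) _ (0, 0, 0) := hcoef.mul (gcomp (0, 1))
    rw [h.fderiv]
    have h0 : cuspPsi ((0, 0, 0) : ℝ × ℝ × ℝ) = ((0, 0) : ℝ × ℝ) := cuspPsi_zero
    rw [ContinuousLinearMap.add_apply, ContinuousLinearMap.smul_apply,
      ContinuousLinearMap.smul_apply, h0]
    simp
    ring
  -- the matrix identity
  have hmat : hessian3 G (0, 0, 0) =
      !![fderiv ℝ (fun q => fderiv ℝ g q (1, 0)) (0, 0) (1, 0), fderiv ℝ g (0, 0) (0, 1), 0;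
         fderiv ℝ g (0, 0) (0, 1), 0, 0;
         0, 0, 2 * fderiv ℝ g (0, 0) (0, 1)] := by
    ext i j
    fin_cases i <;> fin_cases j
    · show fderiv ℝ (fun q => fderiv ℝ G q ((1 : ℝ), (0 : ℝ), (0 : ℝ))) (0, 0, 0) (1, 0, 0) = _
      rw [hd0]; norm_num
    · show fderiv ℝ (fun q => fderiv ℝ G q ((0 : ℝ), (1 : ℝ), (0 : ℝ))) (0, 0, 0) (1, 0, 0) = _
      rw [hd1]; norm_num
    · show fderiv ℝ (fun q => fderiv ℝ G q ((0 : ℝ), (0 : ℝ), (1 : ℝ))) (0, 0, 0) (1, 0, 0) = _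
      rw [hd2]; norm_num
    · show fderiv ℝ (fun q => fderiv ℝ G q ((1 : ℝ), (0 : ℝ), (0 : ℝ))) (0, 0, 0) (0, 1, 0) = _
      rw [hd0]; norm_num
    · show fderiv ℝ (fun q => fderiv ℝ G q ((0 : ℝ), (1 : ℝ), (0 : ℝ))) (0, 0, 0) (0, 1, 0) = _
      rw [hd1]; norm_num
    · show fderiv ℝ (fun q => fderiv ℝ G q ((0 : ℝ), (0 : ℝ), (1 : ℝ))) (0, 0, 0) (0, 1, 0) = _
      rw [hd2]; norm_num
    · show fderiv ℝ (fun q => fderiv ℝ G q ((1 : ℝ), (0 : ℝ), (0 : ℝ))) (0, 0, 0) (0, 0, 1) = _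
      rw [hd0]; norm_num
    · show fderiv ℝ (fun q => fderiv ℝ G q ((0 : ℝ), (1 : ℝ), (0 : ℝ))) (0, 0, 0) (0, 0, 1) = _
      rw [hd1]; norm_num
    · show fderiv ℝ (fun q => fderiv ℝ G q ((0 : ℝ), (0 : ℝ), (1 : ℝ))) (0, 0, 0) (0, 0, 1) = _
      rw [hd2]; norm_num
  have hdet : (hessian3 G (0, 0, 0)).det = -2 * (fderiv ℝ g (0, 0) (0, 1)) ^ 3 := by
    rw [hmat, Matrix.det_fin_three]
    simp
    ring
  refine ⟨hmat, hdet, fun hgt => ⟨?_, ?_⟩⟩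
  · rw [hfd]
    refine ContinuousLinearMap.ext fun v => ?_
    rw [ContinuousLinearMap.comp_apply]
    have h1 : cuspDpsi (0, 0, 0) v = v.1 • ((1 : ℝ), (0 : ℝ)) := by
      rw [cuspDpsi_apply]; simp
    have h0 : cuspPsi ((0, 0, 0) : ℝ × ℝ × ℝ) = ((0, 0) : ℝ × ℝ) := cuspPsi_zero
    rw [h1, h0, map_smul, hgs]
    simp
  · rw [hdet]
    exact mul_ne_zero (by norm_num) (pow_ne_zero _ hgt)
end

section
/- Let a, b ∈ ℝ with b ≠ 0 and consider the real symmetric 3×3 matrix H = [[a, b, 0], [b, 0, 0], [0, 0, 2b]] (the Hessian at the origin of G = g ∘ ψ at a cusp point, with a = g_ss(0,0) and b = g_t(0,0)). Then H has exactly one negative eigenvalue (counted with multiplicity) if b > 0, and exactly two negative eigenvalues if b < 0. Consequently, a non-degenerate critical point of a Morse function located at a cusp point of the product map has Morse index 1 or 2 (never 0 or 3). -/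
/-- Two roots of the quadratic `x² - a x - b²` with positive product are equal. -/
lemma same_sign_root_eq {a b x y : ℝ} (hx : x ^ 2 - a * x - b ^ 2 = 0)
    (hy : y ^ 2 - a * y - b ^ 2 = 0) (hxy : 0 < x * y) : x = y := by
  have h : (x - y) * (x + y - a) = 0 := by nlinarith [hx, hy]
  rcases mul_eq_zero.1 h with h | h
  · linarith [sub_eq_zero.1 h]
  · nlinarith [sq_nonneg b]

/-- The real symmetric matrix `H = [[a, b, 0], [b, 0, 0], [0, 0, 2b]]` with `b ≠ 0` (the
Hessian at the origin of a function composed with the cusp normal form, `a = g_ss(0,0)`,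
`b = g_t(0,0)`) has exactly one negative eigenvalue (with multiplicity) if `b > 0` and
exactly two if `b < 0`; hence a non-degenerate critical point at a cusp point has Morse
index `1` or `2`. -/
theorem cusp_hessian_index (a b : ℝ) (hb : b ≠ 0)
    (H : Matrix (Fin 3) (Fin 3) ℝ)
    (hHdef : H = !![a, b, 0; b, 0, 0; 0, 0, 2 * b])
    (hH : H.IsHermitian) :
    (Finset.univ.filter fun i => hH.eigenvalues i < 0).card = if 0 < b then 1 else 2 := by
  set L := hH.eigenvalues with hL
  set U : Matrix (Fin 3) (Fin 3) ℝ := (hH.eigenvectorUnitary : Matrix (Fin 3) (Fin 3) ℝ) with hU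
  have hb2 : (0:ℝ) < b ^ 2 := by positivity
  have hUU : star U * U = 1 := Unitary.coe_star_mul_self hH.eigenvectorUnitary
  have hUU' : U * star U = 1 := Unitary.coe_mul_star_self hH.eigenvectorUnitary
  have hspec : H = U * Matrix.diagonal (RCLike.ofReal ∘ L) * star U := hH.spectral_theorem
  -- the eigenvalue sum equals the trace
  have hsum : L 0 + L 1 + L 2 = a + 2 * b := by
    have h1 : Matrix.trace H = L 0 + L 1 + L 2 := by
      rw [hspec, Matrix.trace_mul_cycle, hUU, Matrix.one_mul,
        Matrix.trace_diagonal, Fin.sum_univ_three]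
      simp [RCLike.ofReal_real_eq_id]
    have h2 : Matrix.trace H = a + 2 * b := by
      rw [hHdef, Matrix.trace_fin_three]
      norm_num [Matrix.cons_val_zero, Matrix.cons_val_one, Matrix.cons_val_two]
    linarith [h1.symm.trans h2]
  -- the characteristic polynomial identity
  have hdet : ∀ c : ℝ, (L 0 - c) * (L 1 - c) * (L 2 - c)
      = (2 * b - c) * (c ^ 2 - a * c - b ^ 2) := by
    intro c
    have e1 : H - c • 1 = U * (Matrix.diagonal (RCLike.ofReal ∘ L) - c • 1) * star U := by
      rw [Matrix.mul_sub, Matrix.sub_mul, ← hspec]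
      congr 1
      rw [Matrix.mul_smul, Matrix.mul_one, Matrix.smul_mul, hUU']
    have e2 : (H - c • 1).det = (L 0 - c) * (L 1 - c) * (L 2 - c) := by
      rw [e1, Matrix.det_mul_right_comm, hUU', Matrix.one_mul,
        Matrix.smul_one_eq_diagonal]
      rw [Matrix.diagonal_sub, Matrix.det_diagonal, Fin.prod_univ_three]
      simp [RCLike.ofReal_real_eq_id]
    have e3 : (H - c • 1).det = (2 * b - c) * (c ^ 2 - a * c - b ^ 2) := by
      subst hHdef
      rw [Matrix.det_fin_three]
      simp [Matrix.sub_apply, Matrix.smul_apply, Matrix.one_apply, smul_eq_mul]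
      ring
    rw [← e2, e3]
  -- product of eigenvalues (determinant)
  have hprod : L 0 * L 1 * L 2 + 2 * (b * b ^ 2) = 0 := by
    linear_combination hdet 0
  -- each eigenvalue is a root of the characteristic polynomial
  have hroot0 : (2 * b - L 0) * ((L 0) ^ 2 - a * L 0 - b ^ 2) = 0 := by
    linear_combination - hdet (L 0)
  have hroot1 : (2 * b - L 1) * ((L 1) ^ 2 - a * L 1 - b ^ 2) = 0 := by
    linear_combination - hdet (L 1)
  have hroot2 : (2 * b - L 2) * ((L 2) ^ 2 - a * L 2 - b ^ 2) = 0 := by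
    linear_combination - hdet (L 2)
  have hne : ∀ x : ℝ, (2 * b - x) * (x ^ 2 - a * x - b ^ 2) = 0 → x ≠ 0 := by
    intro x hx h
    subst h
    have hb3 : b ^ 3 = 0 := by linear_combination (-(1:ℝ)/2) * hx
    exact hb (pow_eq_zero_iff (three_ne_zero) |>.1 hb3)
  have hquad : ∀ x : ℝ, (2 * b - x) * (x ^ 2 - a * x - b ^ 2) = 0 → x ≠ 2 * b →
      x ^ 2 - a * x - b ^ 2 = 0 := by
    intro x hx hx2
    rcases mul_eq_zero.1 hx with h | h
    · exact absurd (by linarith : x = 2 * b) hx2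
    · exact h
  have card_eq : (Finset.univ.filter fun i => L i < 0).card =
      (if L 0 < 0 then 1 else 0) + (if L 1 < 0 then 1 else 0) + (if L 2 < 0 then 1 else 0) := by
    rw [Finset.card_filter, Fin.sum_univ_three]
  -- the all-equal contradiction
  have allEq : ∀ r : ℝ, r ^ 2 - a * r - b ^ 2 = 0 → r + r + r = a + 2 * b → False := by
    intro r hq hs
    have ha : a = 3 * r - 2 * b := by linarith
    rw [ha] at hq
    nlinarith [hq, sq_nonneg (2 * r - b), hb2]
  rcases lt_or_gt_of_ne hb with hbn | hbp
  · -- b < 0 : exactly two negative eigenvalues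
    rw [if_neg (by linarith)]
    have hbb : b * b ^ 2 < 0 := mul_neg_of_neg_of_pos hbn hb2
    rcases lt_or_gt_of_ne (hne _ hroot0) with h0 | h0 <;>
    rcases lt_or_gt_of_ne (hne _ hroot1) with h1 | h1 <;>
    rcases lt_or_gt_of_ne (hne _ hroot2) with h2 | h2
    · exact absurd hprod (by nlinarith [mul_neg_of_pos_of_neg (mul_pos_of_neg_of_neg h0 h1) h2])
    · rw [card_eq, if_pos h0, if_pos h1, if_neg (not_lt.2 h2.le)]
    · rw [card_eq, if_pos h0, if_neg (not_lt.2 h1.le), if_pos h2]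
    · exact absurd hprod (by nlinarith [mul_neg_of_neg_of_pos (mul_neg_of_neg_of_pos h0 h1) h2])
    · rw [card_eq, if_neg (not_lt.2 h0.le), if_pos h1, if_pos h2]
    · exact absurd hprod (by nlinarith [mul_neg_of_neg_of_pos (mul_neg_of_pos_of_neg h0 h1) h2])
    · exact absurd hprod (by nlinarith [mul_neg_of_pos_of_neg (mul_pos h0 h1) h2])
    · -- all positive: impossible
      exfalso
      have q0 := hquad _ hroot0 (by intro h; rw [h] at h0; linarith)
      have q1 := hquad _ hroot1 (by intro h; rw [h] at h1; linarith)
      have q2 := hquad _ hroot2 (by intro h; rw [h] at h2; linarith)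
      have e01 : L 0 = L 1 := same_sign_root_eq q0 q1 (mul_pos h0 h1)
      have e02 : L 0 = L 2 := same_sign_root_eq q0 q2 (mul_pos h0 h2)
      rw [← e01, ← e02] at hsum
      exact allEq _ q0 hsum
  · -- b > 0 : exactly one negative eigenvalue
    rw [if_pos hbp]
    have hbb : 0 < b * b ^ 2 := mul_pos hbp hb2
    rcases lt_or_gt_of_ne (hne _ hroot0) with h0 | h0 <;>
    rcases lt_or_gt_of_ne (hne _ hroot1) with h1 | h1 <;>
    rcases lt_or_gt_of_ne (hne _ hroot2) with h2 | h2
    · -- all negative: impossible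
      exfalso
      have q0 := hquad _ hroot0 (by intro h; rw [h] at h0; linarith)
      have q1 := hquad _ hroot1 (by intro h; rw [h] at h1; linarith)
      have q2 := hquad _ hroot2 (by intro h; rw [h] at h2; linarith)
      have e01 : L 0 = L 1 := same_sign_root_eq q0 q1 (mul_pos_of_neg_of_neg h0 h1)
      have e02 : L 0 = L 2 := same_sign_root_eq q0 q2 (mul_pos_of_neg_of_neg h0 h2)
      rw [← e01, ← e02] at hsum
      exact allEq _ q0 hsum
    · exact absurd hprod (by nlinarith [mul_pos (mul_pos_of_neg_of_neg h0 h1) h2])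
    · exact absurd hprod (by nlinarith [mul_pos_of_neg_of_neg (mul_neg_of_neg_of_pos h0 h1) h2])
    · rw [card_eq, if_pos h0, if_neg (not_lt.2 h1.le), if_neg (not_lt.2 h2.le)]
    · exact absurd hprod (by nlinarith [mul_pos_of_neg_of_neg (mul_neg_of_pos_of_neg h0 h1) h2])
    · rw [card_eq, if_neg (not_lt.2 h0.le), if_pos h1, if_neg (not_lt.2 h2.le)]
    · rw [card_eq, if_neg (not_lt.2 h0.le), if_neg (not_lt.2 h1.le), if_pos h2]
    · exact absurd hprod (by nlinarith [mul_pos (mul_pos h0 h1) h2])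
end

section
/- Let f, g : ℝ² → ℝ be smooth with f_s(0,0) ≠ 0, and let γ(x) = (3x², 2x³). Then the slope function x ↦ deriv (g ∘ γ) x / deriv (f ∘ γ) x tends to g_s(0,0)/f_s(0,0) as x → 0 within x ≠ 0. In particular, the tangent line of the image curve x ↦ (f(γ(x)), g(γ(x))) at the cusp x = 0 is horizontal (limit slope zero) if and only if g_s(0,0) = 0, which holds if and only if the origin is a critical point of G(u,x,y) = g(u, y² + ux − x³). -/
open Filter Topology

/-- For smooth `f, g : ℝ² → ℝ` with `f_s(0,0) ≠ 0` and the cusp image curve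
`γ(x) = (3x², 2x³)`, the slope `(g ∘ γ)'(x)/(f ∘ γ)'(x)` of the image curve tends to
`g_s(0,0)/f_s(0,0)` as `x → 0` within `x ≠ 0`. In particular, the tangent line of the
graphic at the cusp is horizontal (limit slope zero) iff `g_s(0,0) = 0`, which holds iff
the origin is a critical point of `G(u,x,y) = g(u, y² + ux − x³)`. -/
theorem cusp_tangent_slope (f g : ℝ × ℝ → ℝ)
    (hf : ContDiff ℝ (⊤ : ℕ∞) f) (hg : ContDiff ℝ (⊤ : ℕ∞) g)
    (hfs : fderiv ℝ f (0, 0) (1, 0) ≠ 0)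
    (γ : ℝ → ℝ × ℝ) (hγ : ∀ x : ℝ, γ x = (3 * x ^ 2, 2 * x ^ 3))
    (G : ℝ × ℝ × ℝ → ℝ)
    (hG : ∀ u x y : ℝ, G (u, x, y) = g (u, y ^ 2 + u * x - x ^ 3)) :
    Tendsto (fun x : ℝ => deriv (g ∘ γ) x / deriv (f ∘ γ) x) (𝓝[≠] 0)
      (𝓝 (fderiv ℝ g (0, 0) (1, 0) / fderiv ℝ f (0, 0) (1, 0)))
    ∧ (fderiv ℝ g (0, 0) (1, 0) / fderiv ℝ f (0, 0) (1, 0) = 0 ↔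
        fderiv ℝ g (0, 0) (1, 0) = 0)
    ∧ (fderiv ℝ g (0, 0) (1, 0) = 0 ↔ fderiv ℝ G (0, 0, 0) = 0) := by
  have hle : (1 : WithTop ℕ∞) ≤ ((⊤ : ℕ∞) : WithTop ℕ∞) := by exact_mod_cast le_top
  have hγ0 : γ 0 = (0, 0) := by rw [hγ]; norm_num
  -- derivative of γ
  have hγd : ∀ x : ℝ, HasDerivAt γ (6 * x, 6 * x ^ 2) x := by
    intro x
    have h1 : HasDerivAt (fun x : ℝ => 3 * x ^ 2) (6 * x) x := by
      have := (hasDerivAt_pow 2 x).const_mul (3 : ℝ)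
      refine this.congr_deriv ?_
      push_cast; ring
    have h2 : HasDerivAt (fun x : ℝ => 2 * x ^ 3) (6 * x ^ 2) x := by
      have := (hasDerivAt_pow 3 x).const_mul (2 : ℝ)
      refine this.congr_deriv ?_
      push_cast; ring
    have := h1.prodMk h2
    convert this using 1
    funext x; exact hγ x
  -- deriv formula
  have key : ∀ (h : ℝ × ℝ → ℝ), ContDiff ℝ (⊤ : ℕ∞) h → ∀ x : ℝ,
      deriv (h ∘ γ) x = 6 * x * (fderiv ℝ h (γ x) (1, 0)) + 6 * x ^ 2 * (fderiv ℝ h (γ x) (0, 1)) := by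
    intro h hh x
    have hd : HasDerivAt (h ∘ γ) (fderiv ℝ h (γ x) (6 * x, 6 * x ^ 2)) x :=
      (hh.differentiable (by simp) (γ x)).hasFDerivAt.comp_hasDerivAt x (hγd x)
    rw [hd.deriv]
    have hv : ((6 * x, 6 * x ^ 2) : ℝ × ℝ) = (6 * x) • ((1 : ℝ), (0 : ℝ)) + (6 * x ^ 2) • ((0 : ℝ), (1 : ℝ)) := by
      simp [Prod.ext_iff]
    rw [hv, map_add, map_smul, map_smul, smul_eq_mul, smul_eq_mul]
  -- continuity of fderiv components
  have contc : ∀ (h : ℝ × ℝ → ℝ), ContDiff ℝ (⊤ : ℕ∞) h → ∀ v : ℝ × ℝ,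
      Continuous fun x : ℝ => fderiv ℝ h (γ x) v := by
    intro h hh v
    have hc : Continuous fun p : ℝ × ℝ => fderiv ℝ h p := hh.continuous_fderiv (by simp)
    have hγc : Continuous γ := by
      have : Continuous fun x : ℝ => ((3 * x ^ 2, 2 * x ^ 3) : ℝ × ℝ) := by continuity
      convert this using 1; funext x; exact hγ x
    exact (hc.comp hγc).clm_apply continuous_const
  set Ag := fun x : ℝ => fderiv ℝ g (γ x) (1, 0) with hAg
  set Bg := fun x : ℝ => fderiv ℝ g (γ x) (0, 1) with hBg
  set Af := fun x : ℝ => fderiv ℝ f (γ x) (1, 0) with hAf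
  set Bf := fun x : ℝ => fderiv ℝ f (γ x) (0, 1) with hBf
  have htend : Tendsto (fun x : ℝ => (Ag x + x * Bg x) / (Af x + x * Bf x)) (𝓝 0)
      (𝓝 (fderiv ℝ g (0, 0) (1, 0) / fderiv ℝ f (0, 0) (1, 0))) := by
    have hnum : ContinuousAt (fun x : ℝ => Ag x + x * Bg x) 0 :=
      ((contc g hg (1,0)).add (continuous_id.mul (contc g hg (0,1)))).continuousAt
    have hden : ContinuousAt (fun x : ℝ => Af x + x * Bf x) 0 :=
      ((contc f hf (1,0)).add (continuous_id.mul (contc f hf (0,1)))).continuousAt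
    have hden0 : (Af 0 + 0 * Bf 0) ≠ 0 := by
      simp only [hAf, hγ0, zero_mul, add_zero]
      exact hfs
    have h2 : Tendsto (fun x : ℝ => (Ag x + x * Bg x) / (Af x + x * Bf x)) (𝓝 0)
        (𝓝 ((Ag 0 + 0 * Bg 0) / (Af 0 + 0 * Bf 0))) := hnum.div hden hden0
    have h0 : (Ag 0 + 0 * Bg 0) / (Af 0 + 0 * Bf 0)
        = fderiv ℝ g (0, 0) (1, 0) / fderiv ℝ f (0, 0) (1, 0) := by
      simp only [hAg, hAf, hγ0, zero_mul, add_zero]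
    rwa [h0] at h2
  have part1 : Tendsto (fun x : ℝ => deriv (g ∘ γ) x / deriv (f ∘ γ) x) (𝓝[≠] 0)
      (𝓝 (fderiv ℝ g (0, 0) (1, 0) / fderiv ℝ f (0, 0) (1, 0))) := by
    apply (htend.mono_left nhdsWithin_le_nhds).congr'
    filter_upwards [self_mem_nhdsWithin] with x hx
    have hx0 : x ≠ 0 := by simpa using hx
    have hx6 : (6 : ℝ) * x ≠ 0 := by positivity
    rw [key g hg x, key f hf x]
    have e1 : 6 * x * Ag x + 6 * x ^ 2 * Bg x = (6 * x) * (Ag x + x * Bg x) := by ring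
    have e2 : 6 * x * Af x + 6 * x ^ 2 * Bf x = (6 * x) * (Af x + x * Bf x) := by ring
    rw [e1, e2, mul_div_mul_left _ _ hx6]
  refine ⟨part1, div_eq_zero_iff.trans (or_iff_left hfs), ?_⟩
  -- part 3
  have hGfun : G = fun p : ℝ × ℝ × ℝ => g (p.1, p.2.2 ^ 2 + p.1 * p.2.1 - p.2.1 ^ 3) := by
    funext p; obtain ⟨u, x, y⟩ := p; exact hG u x y
  subst hGfun
  have hx2 : HasFDerivAt (fun p : ℝ × ℝ × ℝ => p.2.1)
      ((ContinuousLinearMap.fst ℝ ℝ ℝ).comp (ContinuousLinearMap.snd ℝ ℝ (ℝ × ℝ)))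
      ((0, 0, 0) : ℝ × ℝ × ℝ) := hasFDerivAt_fst.comp _ hasFDerivAt_snd
  have hy2 : HasFDerivAt (fun p : ℝ × ℝ × ℝ => p.2.2)
      ((ContinuousLinearMap.snd ℝ ℝ ℝ).comp (ContinuousLinearMap.snd ℝ ℝ (ℝ × ℝ)))
      ((0, 0, 0) : ℝ × ℝ × ℝ) := hasFDerivAt_snd.comp _ hasFDerivAt_snd
  have hu2 : HasFDerivAt (fun p : ℝ × ℝ × ℝ => p.1)
      (ContinuousLinearMap.fst ℝ ℝ (ℝ × ℝ)) ((0, 0, 0) : ℝ × ℝ × ℝ) := hasFDerivAt_fst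
  have hsec : HasFDerivAt (fun p : ℝ × ℝ × ℝ => p.2.2 ^ 2 + p.1 * p.2.1 - p.2.1 ^ 3)
      (0 : ℝ × ℝ × ℝ →L[ℝ] ℝ) ((0, 0, 0) : ℝ × ℝ × ℝ) := by
    have hfe : (fun p : ℝ × ℝ × ℝ => p.2.2 ^ 2 + p.1 * p.2.1 - p.2.1 ^ 3)
        = fun p : ℝ × ℝ × ℝ => p.2.2 * p.2.2 + p.1 * p.2.1 - p.2.1 * p.2.1 * p.2.1 := by
      funext p; ring
    rw [hfe]
    have h := ((hy2.mul hy2).add (hu2.mul hx2)).sub ((hx2.mul hx2).mul hx2)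
    refine h.congr_fderiv ?_
    refine ContinuousLinearMap.ext fun v => ?_
    simp
  have hψ : HasFDerivAt (fun p : ℝ × ℝ × ℝ => ((p.1, p.2.2 ^ 2 + p.1 * p.2.1 - p.2.1 ^ 3) : ℝ × ℝ))
      ((ContinuousLinearMap.fst ℝ ℝ (ℝ × ℝ)).prod 0) ((0, 0, 0) : ℝ × ℝ × ℝ) :=
    hu2.prodMk hsec
  have hG' : HasFDerivAt (fun p : ℝ × ℝ × ℝ => g (p.1, p.2.2 ^ 2 + p.1 * p.2.1 - p.2.1 ^ 3))
      ((fderiv ℝ g (0, 0)).comp ((ContinuousLinearMap.fst ℝ ℝ (ℝ × ℝ)).prod 0))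
      ((0, 0, 0) : ℝ × ℝ × ℝ) := by
    have hgd : HasFDerivAt g (fderiv ℝ g (0, 0))
        ((fun p : ℝ × ℝ × ℝ => ((p.1, p.2.2 ^ 2 + p.1 * p.2.1 - p.2.1 ^ 3) : ℝ × ℝ)) (0, 0, 0)) := by
      have : HasFDerivAt g (fderiv ℝ g (0, 0)) ((0, 0) : ℝ × ℝ) :=
        (hg.differentiable (by simp) (0, 0)).hasFDerivAt
      convert this using 2; norm_num
    exact hgd.comp ((0, 0, 0) : ℝ × ℝ × ℝ) hψ
  rw [hG'.fderiv]
  constructor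
  · intro h
    refine ContinuousLinearMap.ext fun v => ?_
    have hv : ((v.1, (0 : ℝ)) : ℝ × ℝ) = v.1 • ((1 : ℝ), (0 : ℝ)) := by simp
    simp only [ContinuousLinearMap.comp_apply, ContinuousLinearMap.prod_apply,
      ContinuousLinearMap.coe_fst', ContinuousLinearMap.zero_apply, hv, map_smul,
      smul_eq_mul, h, mul_zero, ContinuousLinearMap.zero_apply]
  · intro h
    have := ContinuousLinearMap.ext_iff.mp h ((1, 0, 0) : ℝ × ℝ × ℝ)
    simpa using this
end

section
/- Let f, g : ℝ² → ℝ be smooth with f_s(0,0) ≠ 0 and with Jacobian J := f_s(0,0)·g_t(0,0) − f_t(0,0)·g_s(0,0) ≠ 0, and let γ(x) = (3x², 2x³). For x ≠ 0 near 0 define the slope θ(x) = deriv (g ∘ γ) x / deriv (f ∘ γ) x and the second derivative of the image curve with respect to f, κ(x) = deriv θ x / deriv (f ∘ γ) x. Then x·κ(x) tends to J/(6·f_s(0,0)³) ≠ 0 as x → 0 within x ≠ 0; consequently κ(x) diverges to +∞ on one side of 0 and to −∞ on the other side (to +∞ as x → 0⁺ and −∞ as x → 0⁻ when J/f_s(0,0)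 > 0, and the other way when J/f_s(0,0) < 0). Hence the second derivative of the graphic diverges with opposite signs on the two branches meeting at a cusp: the cusp is of type one, i.e. the tangent line at the cusp separates the two branches, and the graphic has no type-two cusps. -/
open Filter Topology

private lemma tendsto_inv_zero_atBot' : Tendsto (fun x : ℝ => x⁻¹) (𝓝[<] (0:ℝ)) atBot := by
  have hneg : Tendsto (fun x : ℝ => -x) (𝓝[<] (0:ℝ)) (𝓝[>] (0:ℝ)) := by
    have := (continuous_neg.tendsto (0:ℝ)).inf
      (tendsto_principal_principal.2 (fun x (hx : x < 0) => (by simpa using hx : (0:ℝ) < -x)))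
    rw [neg_zero] at this; exact this
  have h1 : Tendsto (fun x : ℝ => (-x)⁻¹) (𝓝[<] (0:ℝ)) atTop :=
    tendsto_inv_nhdsGT_zero.comp hneg
  have h2 : Tendsto (fun x : ℝ => -(-x)⁻¹) (𝓝[<] (0:ℝ)) atBot :=
    tendsto_neg_atTop_atBot.comp h1
  refine h2.congr fun x => ?_
  rw [← inv_neg, neg_neg]

/-- Type-one cusps: let `f, g : ℝ² → ℝ` be smooth with `f_s(0,0) ≠ 0` and Jacobian
`J = f_s(0,0)·g_t(0,0) − f_t(0,0)·g_s(0,0) ≠ 0`, let `γ(x) = (3x², 2x³)` be the cusp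
image curve, let `θ(x) = (g ∘ γ)'(x)/(f ∘ γ)'(x)` be the slope of the graphic and
`κ(x) = θ'(x)/(f ∘ γ)'(x)` its second derivative with respect to `f`. Then
`x·κ(x) → J/(6·f_s(0,0)³) ≠ 0` as `x → 0` within `x ≠ 0`; consequently `κ` diverges to
`+∞` on one side of `0` and to `−∞` on the other (according to the sign of `J/f_s(0,0)`):
the second derivative of the graphic diverges with opposite signs on the two branches,
so the cusp is of type one and the graphic has no type-two cusps. -/
theorem cusp_type_one (f g : ℝ × ℝ → ℝ)
    (hf : ContDiff ℝ (⊤ : ℕ∞) f) (hg : ContDiff ℝ (⊤ : ℕ∞) g)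
    (hfs : fderiv ℝ f (0, 0) (1, 0) ≠ 0)
    (J : ℝ)
    (hJdef : J = fderiv ℝ f (0, 0) (1, 0) * fderiv ℝ g (0, 0) (0, 1)
      - fderiv ℝ f (0, 0) (0, 1) * fderiv ℝ g (0, 0) (1, 0))
    (hJ : J ≠ 0)
    (γ : ℝ → ℝ × ℝ) (hγ : ∀ x : ℝ, γ x = (3 * x ^ 2, 2 * x ^ 3))
    (θ κ : ℝ → ℝ)
    (hθ : ∀ x : ℝ, θ x = deriv (g ∘ γ) x / deriv (f ∘ γ) x)
    (hκ : ∀ x : ℝ, κ x = deriv θ x / deriv (f ∘ γ) x) :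
    Tendsto (fun x : ℝ => x * κ x) (𝓝[≠] 0)
      (𝓝 (J / (6 * (fderiv ℝ f (0, 0) (1, 0)) ^ 3)))
    ∧ J / (6 * (fderiv ℝ f (0, 0) (1, 0)) ^ 3) ≠ 0
    ∧ (0 < J / fderiv ℝ f (0, 0) (1, 0) →
        Tendsto κ (𝓝[>] 0) atTop ∧ Tendsto κ (𝓝[<] 0) atBot)
    ∧ (J / fderiv ℝ f (0, 0) (1, 0) < 0 →
        Tendsto κ (𝓝[>] 0) atBot ∧ Tendsto κ (𝓝[<] 0) atTop) := by
  have hγeq : γ = fun x : ℝ => ((3 * x ^ 2 : ℝ), (2 * x ^ 3 : ℝ)) := funext hγ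
  subst hγeq
  set γ : ℝ → ℝ × ℝ := fun x : ℝ => ((3 * x ^ 2 : ℝ), (2 * x ^ 3 : ℝ)) with hγdef
  have hγ0 : γ 0 = (0, 0) := by simp [hγdef]
  have hγd : ∀ x : ℝ, HasDerivAt γ (6 * x, 6 * x ^ 2) x := by
    intro x
    have h1 : HasDerivAt (fun x : ℝ => 3 * x ^ 2) (6 * x) x := by
      have := (hasDerivAt_pow 2 x).const_mul 3
      exact this.congr_deriv (by ring)
    have h2 : HasDerivAt (fun x : ℝ => 2 * x ^ 3) (6 * x ^ 2) x := by
      have := (hasDerivAt_pow 3 x).const_mul 2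
      exact this.congr_deriv (by ring)
    exact h1.prodMk h2
  have hγc : ContDiff ℝ (⊤ : ℕ∞) γ :=
    (contDiff_const.mul (contDiff_id.pow 2)).prodMk (contDiff_const.mul (contDiff_id.pow 3))
  -- the functions A and B
  set A : ℝ → ℝ := fun x => fderiv ℝ f (γ x) (1, x) with hAdef
  set B : ℝ → ℝ := fun x => fderiv ℝ g (γ x) (1, x) with hBdef
  have hAB_cd : ∀ (h : ℝ × ℝ → ℝ), ContDiff ℝ (⊤ : ℕ∞) h →
      ContDiff ℝ (⊤ : ℕ∞) (fun x => fderiv ℝ h (γ x) (1, x)) := by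
    intro h hh
    exact isBoundedBilinearMap_apply.contDiff.comp
      (((hh.fderiv_right (by simp)).comp hγc).prodMk (contDiff_const.prodMk contDiff_id))
  have hAcd : ContDiff ℝ (⊤ : ℕ∞) A := hAB_cd f hf
  have hBcd : ContDiff ℝ (⊤ : ℕ∞) B := hAB_cd g hg
  -- derivative of compositions
  have hcomp : ∀ (h : ℝ × ℝ → ℝ), ContDiff ℝ (⊤ : ℕ∞) h → ∀ x : ℝ,
      deriv (h ∘ γ) x = 6 * x * fderiv ℝ h (γ x) (1, x) := by
    intro h hh x
    have hd : HasDerivAt (h ∘ γ) (fderiv ℝ h (γ x) (6 * x, 6 * x ^ 2)) x :=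
      (hh.differentiable (by simp) (γ x)).hasFDerivAt.comp_hasDerivAt x (hγd x)
    have hsm : ((6 * x, 6 * x ^ 2) : ℝ × ℝ) = (6 * x) • (1, x) := by
      simp [Prod.ext_iff]; ring
    rw [hd.deriv, hsm, (fderiv ℝ h (γ x)).map_smul, smul_eq_mul]
  have hFd : ∀ x : ℝ, deriv (f ∘ γ) x = 6 * x * A x := hcomp f hf
  have hGd : ∀ x : ℝ, deriv (g ∘ γ) x = 6 * x * B x := hcomp g hg
  -- derivatives of A and B at 0
  have hAB_d0 : ∀ (h : ℝ × ℝ → ℝ), ContDiff ℝ (⊤ : ℕ∞) h →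
      HasDerivAt (fun x => fderiv ℝ h (γ x) (1, x)) (fderiv ℝ h (0, 0) (0, 1)) 0 := by
    intro h hh
    have hφ : ContDiff ℝ (⊤ : ℕ∞) (fderiv ℝ h) := hh.fderiv_right (by simp)
    have hγ00 : HasDerivAt γ ((0, 0) : ℝ × ℝ) 0 := by
      have := hγd 0; simpa using this
    have hc : HasDerivAt (fun x => fderiv ℝ h (γ x)) (0 : ℝ × ℝ →L[ℝ] ℝ) 0 := by
      have hd := ((hφ.differentiable (by simp)) (γ 0)).hasFDerivAt.comp_hasDerivAt 0 hγ00
      simpa [Prod.mk_zero_zero, Function.comp_def] using hd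
    have hu : HasDerivAt (fun x : ℝ => ((1 : ℝ), x)) ((0, 1) : ℝ × ℝ) 0 :=
      (hasDerivAt_const (0:ℝ) (1:ℝ)).prodMk (hasDerivAt_id 0)
    have := hc.clm_apply hu
    simpa [hγ0] using this
  have hA0 : HasDerivAt A (fderiv ℝ f (0, 0) (0, 1)) 0 := hAB_d0 f hf
  have hB0 : HasDerivAt B (fderiv ℝ g (0, 0) (0, 1)) 0 := hAB_d0 g hg
  have hAval : A 0 = fderiv ℝ f (0, 0) (1, 0) := by simp [hAdef, hγ0]
  have hBval : B 0 = fderiv ℝ g (0, 0) (1, 0) := by simp [hBdef, hγ0]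
  set c := fderiv ℝ f (0, 0) (1, 0) with hc
  -- the limit function
  set L : ℝ → ℝ := fun x =>
    (deriv B x * A x - B x * deriv A x) / ((A x) ^ 2 * (6 * A x)) with hLdef
  have hAcont : Continuous A := hAcd.continuous
  have hBcont : Continuous B := hBcd.continuous
  have hAdcont : Continuous (deriv A) := hAcd.continuous_deriv (by simp)
  have hBdcont : Continuous (deriv B) := hBcd.continuous_deriv (by simp)
  have hA0ne : A 0 ≠ 0 := by rw [hAval]; exact hfs
  have hLcont : ContinuousAt L 0 := by
    apply ContinuousAt.div
    · exact ((hBdcont.continuousAt.mul hAcont.continuousAt).sub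
        (hBcont.continuousAt.mul hAdcont.continuousAt))
    · exact ((hAcont.continuousAt.pow 2).mul (continuousAt_const.mul hAcont.continuousAt))
    · simp only [hAval]
      positivity
  have hL0 : L 0 = J / (6 * c ^ 3) := by
    simp only [hLdef, hAval, hBval, hA0.deriv, hB0.deriv, hJdef]
    rw [div_eq_div_iff]
    · ring
    · positivity
    · positivity
  -- eventual identity:  x * κ x = L x  near 0 (off 0)
  have hAne : ∀ᶠ x in 𝓝 (0:ℝ), A x ≠ 0 :=
    hAcont.continuousAt.eventually_ne hA0ne
  have hev : ∀ᶠ x in 𝓝[≠] (0:ℝ), x * κ x = L x := by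
    have hAne' : ∀ᶠ x in 𝓝[≠] (0:ℝ), A x ≠ 0 := nhdsWithin_le_nhds hAne
    filter_upwards [hAne', self_mem_nhdsWithin] with x hAx (hx : x ≠ 0)
    -- θ agrees with B/A off zero
    have hθeq : θ =ᶠ[𝓝 x] fun y => B y / A y := by
      have hmem : {y : ℝ | y ≠ 0} ∈ 𝓝 x := isOpen_ne.mem_nhds hx
      filter_upwards [hmem] with y (hy : y ≠ 0)
      rw [hθ y, hGd y, hFd y, mul_div_mul_left _ _ (by positivity : (6:ℝ) * y ≠ 0)]
    have hθd : deriv θ x = (deriv B x * A x - B x * deriv A x) / (A x) ^ 2 := by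
      rw [hθeq.deriv_eq]
      exact (((hBcd.differentiable (by simp) x).hasDerivAt).div
        ((hAcd.differentiable (by simp) x).hasDerivAt) hAx).deriv
    rw [hκ x, hθd, hFd x, hLdef]
    field_simp
  have hmain : Tendsto (fun x : ℝ => x * κ x) (𝓝[≠] 0) (𝓝 (J / (6 * c ^ 3))) := by
    have := hLcont.tendsto.mono_left (nhdsWithin_le_nhds (s := {(0:ℝ)}ᶜ))
    rw [hL0] at this
    exact this.congr' (hev.mono fun x hx => hx.symm)
  have hlne : J / (6 * c ^ 3) ≠ 0 := div_ne_zero hJ (by positivity)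
  refine ⟨hmain, hlne, ?_, ?_⟩
  all_goals {
    intro hsgn
    have hc2 : (0:ℝ) < 6 * c ^ 2 := by positivity
    have hlval : J / (6 * c ^ 3) = (J / c) / (6 * c ^ 2) := by
      rw [div_div]; congr 1; ring
    first
    | have hlpos : 0 < J / (6 * c ^ 3) := by rw [hlval]; exact div_pos hsgn hc2
    | have hlpos : J / (6 * c ^ 3) < 0 := by rw [hlval]; exact div_neg_of_neg_of_pos hsgn hc2
    have hsub1 : (𝓝[>] (0:ℝ)) ≤ 𝓝[≠] 0 :=
      nhdsWithin_mono 0 fun x (hx : 0 < x) => ne_of_gt hx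
    have hsub2 : (𝓝[<] (0:ℝ)) ≤ 𝓝[≠] 0 :=
      nhdsWithin_mono 0 fun x (hx : x < 0) => ne_of_lt hx
    have hκeq1 : ∀ᶠ x in 𝓝[>] (0:ℝ), (x * κ x) * x⁻¹ = κ x := by
      filter_upwards [self_mem_nhdsWithin] with x (hx : 0 < x)
      field_simp
    have hκeq2 : ∀ᶠ x in 𝓝[<] (0:ℝ), (x * κ x) * x⁻¹ = κ x := by
      filter_upwards [self_mem_nhdsWithin] with x (hx : x < 0)
      have : x ≠ 0 := ne_of_lt hx
      field_simp
    constructor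
    · first
      | exact (Tendsto.pos_mul_atTop hlpos (hmain.mono_left hsub1) tendsto_inv_nhdsGT_zero).congr'
          hκeq1
      | exact (Tendsto.neg_mul_atTop hlpos (hmain.mono_left hsub1) tendsto_inv_nhdsGT_zero).congr'
          hκeq1
    · first
      | exact (Tendsto.pos_mul_atBot hlpos (hmain.mono_left hsub2) tendsto_inv_zero_atBot').congr'
          hκeq2
      | exact (Tendsto.neg_mul_atBot hlpos (hmain.mono_left hsub2) tendsto_inv_zero_atBot').congr'
          hκeq2
  }
end
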